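/- For n >= 3, no preference profile satisfies both m-MaxProp (maximum proposals under men-proposing DA) and w-MaxProp (maximum proposals under women-proposing DA). -/

import Mathlib

open scoped Classical

noncomputable section

/-- A two-sided matching market with `n` men and `n` women, each with a complete
strict preference order over the other side. `mpref m k` is man `m`'s `k`-th
favourite woman (0 = top), and `wpref w k` is woman `w`'s `k`-th favourite man. -/
structure Profile (n : ℕ) where
  mpref : Fin n → (Fin n ≃ Fin n)
  wpref : Fin n → (Fin n ≃ Fin n)

namespace Profile

variable {n : ℕ}

/-- rank (0 = best) of woman `w` in man `m`'s preference list -/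
def mrank (P : Profile n) (m w : Fin n) : ℕ := ((P.mpref m).symm w : ℕ)

/-- rank (0 = best) of man `m` in woman `w`'s preference list -/
def wrank (P : Profile n) (w m : Fin n) : ℕ := ((P.wpref w).symm m : ℕ)

/-- man `m` strictly prefers woman `w` to woman `w'` -/
def mPrefers (P : Profile n) (m w w' : Fin n) : Prop := P.mrank m w < P.mrank m w'

/-- woman `w` strictly prefers man `m` to man `m'` -/
def wPrefers (P : Profile n) (w m m' : Fin n) : Prop := P.wrank w m < P.wrank w m'

/-- top choice of man `m` -/
def topM (P : Profile n) (m : Fin n) : Fin n := P.mpref m ⟨0, m.pos⟩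

/-- top choice of woman `w` -/
def topW (P : Profile n) (w : Fin n) : Fin n := P.wpref w ⟨0, w.pos⟩

/-- the profile with the roles of men and women exchanged -/
def swap (P : Profile n) : Profile n := ⟨P.wpref, P.mpref⟩

/-- State of the men-proposing deferred acceptance algorithm:
`next m` = number of proposals man `m` has made so far,
`held w` = the man woman `w` currently tentatively holds (if any). -/
structure DAState (n : ℕ) where
  next : Fin n → ℕ
  held : Fin n → Option (Fin n)

def initState (n : ℕ) : DAState n := ⟨fun _ => 0, fun _ => none⟩

/-- the men currently unmatched (held by no woman) -/
def unmatched (s : DAState n) : Finset (Fin n) :=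
  Finset.univ.filter fun m => ∀ w : Fin n, s.held w ≠ some m

/-- the woman man `m` proposes to next: his most preferred woman among those
who have not rejected him yet -/
def target (P : Profile n) (s : DAState n) (m : Fin n) : Fin n :=
  P.mpref m ⟨s.next m % n, Nat.mod_lt _ m.pos⟩

/-- the men proposing to woman `w` in the current round -/
def proposers (P : Profile n) (s : DAState n) (w : Fin n) : Finset (Fin n) :=
  (unmatched s).filter fun m => target P s m = w

/-- one round of the men-proposing deferred acceptance algorithm: every
unmatched man proposes to his favourite woman who has not rejected him yet,
and every woman tentatively holds her favourite among her current partner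
and the new proposers, rejecting the rest -/
def step (P : Profile n) (s : DAState n) : DAState n where
  next := fun m => if m ∈ unmatched s then s.next m + 1 else s.next m
  held := fun w => ((proposers P s w ∪ (s.held w).toFinset).toList).argmin (P.wrank w)

/-- the state after `k` rounds of men-proposing deferred acceptance -/
def stateAt (P : Profile n) (k : ℕ) : DAState n := (step P)^[k] (initState n)

/-- the final state of men-proposing deferred acceptance
(`n * n + 1` iterations is always enough to reach the fixed point) -/
def finalState (P : Profile n) : DAState n := stateAt P (n * n + 1)

/-- total number of proposals made during the men-proposing DA -/
def totalProposals (P : Profile n) : ℕ := ∑ m : Fin n, (finalState P).next m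

/-- number of rounds of the men-proposing DA (rounds in which some proposal is made) -/
def rounds (P : Profile n) : ℕ :=
  ((Finset.range (n * n + 1)).filter fun k => (unmatched (stateAt P k)).Nonempty).card

/-- total number of proposals received by woman `w` during the men-proposing DA -/
def proposalsTo (P : Profile n) (w : Fin n) : ℕ :=
  ∑ k ∈ Finset.range (n * n + 1), (proposers P (stateAt P k) w).card

/-- man `m` proposes to woman `w` at some point during the men-proposing DA -/
def proposedTo (P : Profile n) (m w : Fin n) : Prop :=
  ∃ k < n * n + 1, m ∈ proposers P (stateAt P k) w

/-- the men-proposing DA makes the maximum possible number `n² - n + 1` of proposals -/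
def MaxProp (P : Profile n) : Prop := P.totalProposals = n * n + 1 - n

/-- the men-proposing DA takes the maximum possible number `n² - 2n + 2` of rounds -/
def MaxRou (P : Profile n) : Prop := P.rounds = n * n + 2 - 2 * n

/-- a matching (a bijection man ↦ woman) is stable iff no man-woman pair mutually
prefer each other to their assigned partners -/
def Stable (P : Profile n) (μ : Fin n ≃ Fin n) : Prop :=
  ¬ ∃ (m w : Fin n), P.mPrefers m w (μ m) ∧ P.wPrefers w m (μ.symm w)

/-- the profile admits a unique stable matching -/
def USM (P : Profile n) : Prop := ∃! μ : Fin n ≃ Fin n, P.Stable μ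

/-- the sequential preference condition of Eeckhout (2000) -/
def SPC (P : Profile n) : Prop :=
  ∃ σ τ : Equiv.Perm (Fin n), ∀ i j : Fin n, i < j →
    P.mPrefers (σ i) (τ i) (τ j) ∧ P.wPrefers (τ i) (σ i) (σ j)

/-- the no crossing condition of Clark (2006) -/
def NCC (P : Profile n) : Prop :=
  ∃ σ τ : Equiv.Perm (Fin n), ∀ i j k l : Fin n, i < j → k < l →
    (P.mPrefers (σ i) (τ l) (τ k) → P.mPrefers (σ j) (τ l) (τ k)) ∧
    (P.wPrefers (τ k) (σ j) (σ i) → P.wPrefers (τ l) (σ j) (σ i))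

end Profile

-- ============ auxiliary development ============
namespace Profile

variable {n : ℕ} {P : Profile n}

lemma mrank_lt (P : Profile n) (m w : Fin n) : P.mrank m w < n := ((P.mpref m).symm w).isLt

lemma wrank_lt (P : Profile n) (w m : Fin n) : P.wrank w m < n := ((P.wpref w).symm m).isLt

lemma mrank_injective (P : Profile n) (m : Fin n) {w w' : Fin n}
    (h : P.mrank m w = P.mrank m w') : w = w' := by
  have := Fin.val_injective h
  exact (P.mpref m).symm.injective this

lemma wrank_injective (P : Profile n) (w : Fin n) {m m' : Fin n}
    (h : P.wrank w m = P.wrank w m') : m = m' := by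
  have := Fin.val_injective h
  exact (P.wpref w).symm.injective this

lemma mrank_mpref (P : Profile n) (m : Fin n) (j : Fin n) :
    P.mrank m (P.mpref m j) = (j : ℕ) := by
  simp [mrank]

/-- the pool of candidates woman `w` chooses from in a round -/
def pool (P : Profile n) (s : DAState n) (w : Fin n) : Finset (Fin n) :=
  proposers P s w ∪ (s.held w).toFinset

lemma mem_unmatched {s : DAState n} {m : Fin n} :
    m ∈ unmatched s ↔ ∀ w, s.held w ≠ some m := by simp [unmatched]

lemma mem_pool_of_held {s : DAState n} {w m : Fin n} (h : s.held w = some m) :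
    m ∈ pool P s w := by
  simp [pool, Finset.mem_union, Option.mem_toFinset, h]

lemma mem_pool_of_proposer {s : DAState n} {w m : Fin n} (h : m ∈ proposers P s w) :
    m ∈ pool P s w := Finset.mem_union_left _ h

lemma step_held (P : Profile n) (s : DAState n) (w : Fin n) :
    (step P s).held w = ((pool P s w).toList).argmin (P.wrank w) := rfl

lemma winner_mem {s : DAState n} {w m : Fin n} (h : (step P s).held w = some m) :
    m ∈ pool P s w := by
  rw [step_held] at h
  exact Finset.mem_toList.1 (List.argmin_mem h)

lemma winner_le {s : DAState n} {w m m' : Fin n} (h : (step P s).held w = some m)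
    (hm' : m' ∈ pool P s w) : P.wrank w m ≤ P.wrank w m' := by
  rw [step_held] at h
  exact List.le_of_mem_argmin (Finset.mem_toList.2 hm') h

lemma winner_exists {s : DAState n} {w m : Fin n} (hm : m ∈ pool P s w) :
    ∃ m', (step P s).held w = some m' := by
  rw [step_held]
  rcases ho : (pool P s w).toList.argmin (P.wrank w) with _ | m'
  · rw [List.argmin_eq_none, Finset.toList_eq_nil] at ho
    simp [ho] at hm
  · exact ⟨m', rfl⟩

lemma step_none {s : DAState n} {w : Fin n} (h : (step P s).held w = none) :
    pool P s w = ∅ := by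
  rw [step_held, List.argmin_eq_none, Finset.toList_eq_nil] at h
  exact h

/-- The basic invariant of the men-proposing DA. -/
structure Inv (P : Profile n) (s : DAState n) : Prop where
  rank_held : ∀ m w, s.held w = some m → s.next m = P.mrank m w + 1
  inj : ∀ w w' m, s.held w = some m → s.held w' = some m → w = w'
  none_le : ∀ w, s.held w = none → ∀ m, s.next m ≤ P.mrank m w
  best : ∀ m w m', s.held w = some m → P.mrank m' w < s.next m' →
    P.wrank w m ≤ P.wrank w m'

lemma Inv.exists_none {s : DAState n} (hs : Inv P s) {m : Fin n}
    (hm : m ∈ unmatched s) : ∃ w, s.held w = none := by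
  by_contra h
  push_neg at h
  have h' : ∀ w, ∃ mw, s.held w = some mw := by
    intro w
    rcases ho : s.held w with _ | mw
    · exact absurd ho (h w)
    · exact ⟨mw, rfl⟩
  choose f hf using h'
  have hinj : Function.Injective f := by
    intro w w' hww
    exact hs.inj w w' (f w) (hf w) (hww ▸ hf w')
  have hsurj : Function.Surjective f := Finite.surjective_of_injective hinj
  obtain ⟨w, hw⟩ := hsurj m
  exact (mem_unmatched.1 hm) w (hw ▸ hf w)

lemma Inv.next_lt {s : DAState n} (hs : Inv P s) {m : Fin n}
    (hm : m ∈ unmatched s) : s.next m < n := by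
  obtain ⟨w, hw⟩ := hs.exists_none hm
  exact lt_of_le_of_lt (hs.none_le w hw m) (mrank_lt P m w)

lemma Inv.mrank_target {s : DAState n} (hs : Inv P s) {m : Fin n}
    (hm : m ∈ unmatched s) : P.mrank m (target P s m) = s.next m := by
  have h := hs.next_lt hm
  rw [target]
  rw [mrank_mpref]
  exact Nat.mod_eq_of_lt h

lemma Inv.next_le {s : DAState n} (hs : Inv P s) (m : Fin n) : s.next m ≤ n := by
  by_cases hm : m ∈ unmatched s
  · exact le_of_lt (hs.next_lt hm)
  · rw [mem_unmatched] at hm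
    push_neg at hm
    obtain ⟨w, hw⟩ := hm
    rw [hs.rank_held m w hw]
    exact mrank_lt P m w

end Profile

namespace Profile

variable {n : ℕ} {P : Profile n}

lemma mem_proposers {s : DAState n} {w m : Fin n} :
    m ∈ proposers P s w ↔ m ∈ unmatched s ∧ target P s m = w := by
  simp [proposers]

lemma step_next (P : Profile n) (s : DAState n) (m : Fin n) :
    (step P s).next m = if m ∈ unmatched s then s.next m + 1 else s.next m := rfl

lemma not_unmatched_of_held {s : DAState n} {w m : Fin n} (h : s.held w = some m) :
    m ∉ unmatched s := by
  rw [mem_unmatched]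
  push_neg
  exact ⟨w, h⟩

/-- any member of the pool of `w` has, after the step, proposed to `w` as his last proposal -/
lemma pool_rank {s : DAState n} (hs : Inv P s) {w m : Fin n} (h : m ∈ pool P s w) :
    (step P s).next m = P.mrank m w + 1 := by
  rcases Finset.mem_union.1 h with hp | hh
  · rw [mem_proposers] at hp
    rw [step_next, if_pos hp.1, ← hp.2, hs.mrank_target hp.1]
  · rw [Option.mem_toFinset] at hh
    rw [step_next, if_neg (not_unmatched_of_held hh)]
    exact hs.rank_held m w hh

lemma Inv.step (hs : Inv P s) : Inv P (step P s) := by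
  constructor
  · intro m w h
    exact pool_rank hs (winner_mem h)
  · intro w w' m h h'
    have hm := winner_mem h
    have hm' := winner_mem h'
    rcases Finset.mem_union.1 hm with hp | hh <;> rcases Finset.mem_union.1 hm' with hp' | hh'
    · rw [mem_proposers] at hp hp'
      rw [← hp.2, ← hp'.2]
    · rw [Option.mem_toFinset] at hh'
      exact absurd (mem_proposers.1 hp).1 (not_unmatched_of_held hh')
    · rw [Option.mem_toFinset] at hh
      exact absurd (mem_proposers.1 hp').1 (not_unmatched_of_held hh)
    · rw [Option.mem_toFinset] at hh hh'
      exact hs.inj w w' m hh hh'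
  · intro w h m
    have hpool := step_none h
    have hnone : s.held w = none := by
      rcases ho : s.held w with _ | m0
      · rfl
      · exact absurd (hpool ▸ mem_pool_of_held ho) (Finset.notMem_empty m0)
    have hle := hs.none_le w hnone m
    rw [step_next]
    by_cases hm : m ∈ unmatched s
    · rw [if_pos hm]
      have htm : target P s m ≠ w := by
        intro ht
        have : m ∈ proposers P s w := mem_proposers.2 ⟨hm, ht⟩
        exact absurd (hpool ▸ mem_pool_of_proposer this) (Finset.notMem_empty m)
      have : s.next m ≠ P.mrank m w := by
        intro he
        apply htm
        apply mrank_injective P m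
        rw [hs.mrank_target hm, he]
      omega
    · rw [if_neg hm]; exact hle
  · intro m w m' h hm'
    -- m is the winner for w; m' has proposed to w at some point
    have hwin : ∀ x ∈ pool P s w, P.wrank w m ≤ P.wrank w x := fun x hx => winner_le h hx
    -- case analysis on whether m' proposed before this round or during it
    have key : (∃ m0, s.held w = some m0 ∧ P.wrank w m0 ≤ P.wrank w m') ∨ m' ∈ pool P s w := by
      rw [step_next] at hm'
      by_cases hu : m' ∈ unmatched s
      · rw [if_pos hu] at hm'
        rcases lt_or_eq_of_le (Nat.lt_succ_iff.1 hm') with hlt | heq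
        · -- proposed before: w must hold someone
          rcases ho : s.held w with _ | m0
          · exact absurd (hs.none_le w ho m') (not_le.2 hlt)
          · exact Or.inl ⟨m0, rfl, hs.best m0 w m' ho hlt⟩
        · -- proposes this round
          right
          apply mem_pool_of_proposer
          refine mem_proposers.2 ⟨hu, ?_⟩
          exact mrank_injective P m' (by rw [hs.mrank_target hu, heq])
      · rw [if_neg hu] at hm'
        rcases ho : s.held w with _ | m0
        · exact absurd (hs.none_le w ho m') (not_le.2 hm')
        · exact Or.inl ⟨m0, rfl, hs.best m0 w m' ho hm'⟩
    rcases key with ⟨m0, hm0, hle⟩ | hp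
    · exact le_trans (hwin m0 (mem_pool_of_held hm0)) hle
    · exact hwin m' hp

lemma stateAt_zero (P : Profile n) : stateAt P 0 = initState n := rfl

lemma stateAt_succ (P : Profile n) (k : ℕ) :
    stateAt P (k + 1) = step P (stateAt P k) := Function.iterate_succ_apply' _ _ _

lemma Inv.stateAt (P : Profile n) (k : ℕ) : Inv P (stateAt P k) := by
  induction k with
  | zero =>
    constructor <;> · intros; simp_all [stateAt_zero, initState, mrank]
  | succ k ih =>
    rw [stateAt_succ]
    exact ih.step

end Profile

namespace Profile

variable {n : ℕ} {P : Profile n}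

lemma step_eq_of_empty {s : DAState n} (h : unmatched s = ∅) : step P s = s := by
  have hnext : (step P s).next = s.next := by
    funext m
    rw [step_next, if_neg (by simp [h])]
  have hheld : (step P s).held = s.held := by
    funext w
    have hprop : proposers P s w = ∅ := by
      rw [proposers, h, Finset.filter_empty]
    rw [step_held, pool, hprop, Finset.empty_union]
    rcases ho : s.held w with _ | m
    · simp
    · simp [Finset.toList_singleton]
  have h1 : step P s = ⟨(step P s).next, (step P s).held⟩ := rfl
  rw [h1, hnext, hheld]

lemma sum_next_le (hs : Inv P s) : ∑ m : Fin n, s.next m ≤ n * n := by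
  calc ∑ m : Fin n, s.next m ≤ ∑ _m : Fin n, n := Finset.sum_le_sum fun m _ => hs.next_le m
  _ = n * n := by simp [Finset.sum_const, mul_comm]

lemma exists_empty_unmatched (P : Profile n) : ∃ k ≤ n * n, unmatched (stateAt P k) = ∅ := by
  by_contra h
  push_neg at h
  have key : ∀ k, k ≤ n * n + 1 → k ≤ ∑ m : Fin n, (stateAt P k).next m := by
    intro k
    induction k with
    | zero => simp
    | succ k ih =>
      intro hk
      have hne : (unmatched (stateAt P k)).Nonempty :=
        h k (by omega)
      obtain ⟨m0, hm0⟩ := hne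
      have hlt : ∑ m : Fin n, (stateAt P k).next m < ∑ m : Fin n, (stateAt P (k+1)).next m := by
        rw [stateAt_succ]
        apply Finset.sum_lt_sum
        · intro m _
          rw [step_next]
          split <;> omega
        · refine ⟨m0, Finset.mem_univ m0, ?_⟩
          rw [step_next, if_pos hm0]
          omega
      have := ih (by omega)
      omega
  have h1 := key (n * n + 1) le_rfl
  have h2 := sum_next_le (Inv.stateAt P (n * n + 1))
  omega

end Profile

namespace Profile

variable {n : ℕ} {P : Profile n}

lemma final_unmatched_empty (P : Profile n) : unmatched (finalState P) = ∅ := by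
  obtain ⟨k, hk, he⟩ := exists_empty_unmatched P
  have hfix : step P (stateAt P k) = stateAt P k := step_eq_of_empty he
  have heq : finalState P = stateAt P k := by
    rw [finalState]
    have h1 : n * n + 1 = (n * n + 1 - k) + k := by omega
    rw [h1]
    show (step P)^[(n * n + 1 - k) + k] (initState n) = _
    rw [Function.iterate_add_apply]
    exact Function.iterate_fixed hfix _
  rw [heq]; exact he

lemma Inv.final (P : Profile n) : Inv P (finalState P) := Inv.stateAt P _

lemma exists_da (P : Profile n) :
    ∃ μ : Fin n ≃ Fin n, ∀ m, (finalState P).held (μ m) = some m := by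
  have hall : ∀ m : Fin n, ∃ w, (finalState P).held w = some m := by
    intro m
    have hm : m ∉ unmatched (finalState P) := by
      rw [final_unmatched_empty]; exact Finset.notMem_empty m
    rw [mem_unmatched] at hm
    push_neg at hm
    exact hm
  choose f hf using hall
  have hinj : Function.Injective f := by
    intro m m' h
    have h1 := hf m
    rw [h, hf m'] at h1
    exact (Option.some_injective _ h1).symm
  exact ⟨Equiv.ofBijective f ⟨hinj, Finite.surjective_of_injective hinj⟩, hf⟩

/-- the final matching of the men-proposing DA -/
def daMatching (P : Profile n) : Fin n ≃ Fin n := Classical.choose (exists_da P)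

lemma daMatching_held (P : Profile n) (m : Fin n) :
    (finalState P).held (P.daMatching m) = some m :=
  Classical.choose_spec (exists_da P) m

lemma daMatching_held' (P : Profile n) (w : Fin n) :
    (finalState P).held w = some ((P.daMatching).symm w) := by
  have := daMatching_held P ((P.daMatching).symm w)
  rwa [Equiv.apply_symm_apply] at this

lemma next_final (P : Profile n) (m : Fin n) :
    (finalState P).next m = P.mrank m (P.daMatching m) + 1 :=
  (Inv.final P).rank_held m _ (daMatching_held P m)

lemma totalProposals_eq (P : Profile n) :
    P.totalProposals = (∑ m : Fin n, P.mrank m (P.daMatching m)) + n := by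
  rw [totalProposals]
  simp only [next_final]
  rw [Finset.sum_add_distrib]
  simp

lemma daMatching_stable (P : Profile n) : P.Stable (P.daMatching) := by
  rintro ⟨m, w, h1, h2⟩
  rw [mPrefers] at h1
  rw [wPrefers] at h2
  have hlt : P.mrank m w < (finalState P).next m := by
    rw [next_final]; omega
  have := (Inv.final P).best ((P.daMatching).symm w) w m (daMatching_held' P w) hlt
  omega

end Profile

namespace Profile

variable {n : ℕ} {P : Profile n} {ρ : Fin n ≃ Fin n} {s : DAState n}

/-- invariant for the men-optimality proof: no man is ever rejected by
(or proposes beyond) his partner in a stable matching `ρ` -/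
structure OptInv (P : Profile n) (ρ : Fin n ≃ Fin n) (s : DAState n) : Prop where
  le : ∀ m, s.next m ≤ P.mrank m (ρ m) + 1
  eq : ∀ m, s.next m = P.mrank m (ρ m) + 1 → s.held (ρ m) = some m

lemma pool_strict (hs : Inv P s) (ho : OptInv P ρ s) {w m'' : Fin n}
    (h : m'' ∈ pool P s w) (hne : w ≠ ρ m'') :
    P.mrank m'' w < P.mrank m'' (ρ m'') := by
  have hle : P.mrank m'' w ≤ P.mrank m'' (ρ m'') := by
    rcases Finset.mem_union.1 h with hp | hh
    · rw [mem_proposers] at hp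
      have h1 : P.mrank m'' w = s.next m'' := by rw [← hp.2, hs.mrank_target hp.1]
      have h2 := ho.le m''
      rcases eq_or_lt_of_le h2 with heq | hlt
      · exact absurd (mem_unmatched.1 hp.1 (ρ m'')) (by simp [ho.eq m'' heq])
      · omega
    · rw [Option.mem_toFinset] at hh
      have h1 := hs.rank_held m'' w hh
      have h2 := ho.le m''
      omega
  rcases eq_or_lt_of_le hle with heq | hlt
  · exact absurd (mrank_injective P m'' heq) hne
  · exact hlt

lemma accept_stable (hs : Inv P s) (hρ : P.Stable ρ) (ho : OptInv P ρ s) {m w : Fin n}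
    (hw : w = ρ m) (h : m ∈ pool P s w) : (step P s).held w = some m := by
  obtain ⟨m'', h''⟩ := winner_exists h
  by_cases hmm : m'' = m
  · rw [hmm] at h''; exact h''
  exfalso
  have hle := winner_le h'' h
  have hlt : P.wrank w m'' < P.wrank w m :=
    lt_of_le_of_ne hle fun he => hmm (wrank_injective P w he)
  have hne : w ≠ ρ m'' := by
    intro he
    exact hmm (ρ.injective (hw ▸ he)).symm
  have hblock := pool_strict hs ho (winner_mem h'') hne
  apply hρ
  refine ⟨m'', w, hblock, ?_⟩
  rw [wPrefers, hw, Equiv.symm_apply_apply]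
  rw [hw] at hlt
  exact hlt

lemma OptInv.step (hs : Inv P s) (hρ : P.Stable ρ) (ho : OptInv P ρ s) :
    OptInv P ρ (step P s) := by
  constructor
  · intro m
    rw [step_next]
    by_cases hu : m ∈ unmatched s
    · rw [if_pos hu]
      have h2 := ho.le m
      rcases eq_or_lt_of_le h2 with heq | hlt
      · exact absurd (mem_unmatched.1 hu (ρ m)) (by simp [ho.eq m heq])
      · omega
    · rw [if_neg hu]; exact ho.le m
  · intro m hm
    rw [step_next] at hm
    by_cases hu : m ∈ unmatched s
    · rw [if_pos hu] at hm
      have h1 : s.next m = P.mrank m (ρ m) := by omega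
      have ht : target P s m = ρ m := by
        apply mrank_injective P m
        rw [hs.mrank_target hu, h1]
      exact accept_stable hs hρ ho rfl
        (mem_pool_of_proposer (mem_proposers.2 ⟨hu, ht⟩))
    · rw [if_neg hu] at hm
      exact accept_stable hs hρ ho rfl (mem_pool_of_held (ho.eq m hm))

lemma OptInv.stateAt (hρ : P.Stable ρ) (k : ℕ) : OptInv P ρ (stateAt P k) := by
  induction k with
  | zero =>
    constructor
    · intro m; simp [stateAt_zero, initState]
    · intro m hm; simp [stateAt_zero, initState] at hm
  | succ k ih =>
    rw [stateAt_succ]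
    exact ih.step (Inv.stateAt P k) hρ

lemma daMatching_optimal (P : Profile n) (hρ : P.Stable ρ) (m : Fin n) :
    P.mrank m (P.daMatching m) ≤ P.mrank m (ρ m) := by
  have h1 := (OptInv.stateAt hρ (n * n + 1)).le m
  have h2 := next_final P m
  rw [show stateAt P (n * n + 1) = finalState P from rfl] at h1
  omega

end Profile

namespace Profile

variable {n : ℕ} {P : Profile n} {ν : Fin n ≃ Fin n}

lemma card_lt_rank (e : Fin n ≃ Fin n) (x : Fin n) :
    (Finset.univ.filter fun y => ((e.symm y : Fin n) : ℕ) < ((e.symm x : Fin n) : ℕ)).card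
      = ((e.symm x : Fin n) : ℕ) := by
  have h1 : (Finset.univ.filter fun y => ((e.symm y : Fin n) : ℕ) < ((e.symm x : Fin n) : ℕ))
      = (Finset.univ.filter fun j : Fin n => j < e.symm x).map e.toEmbedding := by
    ext y
    simp only [Finset.mem_map, Finset.mem_filter, Finset.mem_univ, true_and,
      Equiv.toEmbedding_apply]
    constructor
    · intro h
      exact ⟨e.symm y, h, e.apply_symm_apply y⟩
    · rintro ⟨j, hj, rfl⟩
      rwa [Equiv.symm_apply_apply]
  rw [h1, Finset.card_map]
  have h2 : (Finset.univ.filter fun j : Fin n => j < e.symm x) = Finset.Iio (e.symm x) := by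
    ext j; simp
  rw [h2, Fin.card_Iio]

lemma sum_mrank_eq (ν : Fin n ≃ Fin n) :
    (Finset.univ.filter fun p : Fin n × Fin n => P.mPrefers p.1 p.2 (ν p.1)).card
      = ∑ m : Fin n, P.mrank m (ν m) := by
  rw [Finset.card_filter]
  rw [Fintype.sum_prod_type]
  congr 1
  funext m
  rw [← Finset.card_filter]
  simp only [mPrefers, mrank]
  convert card_lt_rank (P.mpref m) (ν m)
  ext; simp

lemma sum_wrank_eq (ν : Fin n ≃ Fin n) :
    (Finset.univ.filter fun p : Fin n × Fin n => P.wPrefers p.2 p.1 (ν.symm p.2)).card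
      = ∑ w : Fin n, P.wrank w (ν.symm w) := by
  rw [Finset.card_filter]
  rw [Fintype.sum_prod_type_right]
  congr 1
  funext w
  rw [← Finset.card_filter]
  simp only [wPrefers, wrank]
  convert card_lt_rank (P.wpref w) (ν.symm w)
  ext; simp

lemma stable_count (hν : P.Stable ν) :
    (∑ m : Fin n, P.mrank m (ν m)) + (∑ w : Fin n, P.wrank w (ν.symm w)) ≤ n * n - n := by
  classical
  set S1 := Finset.univ.filter fun p : Fin n × Fin n => P.mPrefers p.1 p.2 (ν p.1) with hS1
  set S2 := Finset.univ.filter fun p : Fin n × Fin n => P.wPrefers p.2 p.1 (ν.symm p.2) with hS2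
  have hdisj : Disjoint S1 S2 := by
    rw [Finset.disjoint_left]
    rintro ⟨m, w⟩ h1 h2
    rw [hS1, Finset.mem_filter] at h1
    rw [hS2, Finset.mem_filter] at h2
    exact hν ⟨m, w, h1.2, h2.2⟩
  set G := Finset.univ.image fun m : Fin n => (m, ν m) with hG
  have hGcard : G.card = n := by
    rw [hG, Finset.card_image_of_injective _ (fun m m' h => (Prod.mk.injEq _ _ _ _ ▸ h : _ ∧ _).1),
      Finset.card_univ, Fintype.card_fin]
  have hsub : S1 ∪ S2 ⊆ Finset.univ \ G := by
    intro p hp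
    rw [Finset.mem_sdiff]
    refine ⟨Finset.mem_univ p, ?_⟩
    intro hpG
    rw [hG, Finset.mem_image] at hpG
    obtain ⟨m, _, hm⟩ := hpG
    rcases Finset.mem_union.1 hp with h | h
    · rw [hS1, Finset.mem_filter] at h
      rw [← hm] at h
      exact lt_irrefl _ h.2
    · rw [hS2, Finset.mem_filter] at h
      rw [← hm] at h
      have h2 := h.2
      simp only [wPrefers] at h2
      rw [Equiv.symm_apply_apply] at h2
      exact lt_irrefl _ h2
  have hcard : S1.card + S2.card ≤ n * n - n := by
    rw [← Finset.card_union_of_disjoint hdisj]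
    calc (S1 ∪ S2).card ≤ (Finset.univ \ G).card := Finset.card_le_card hsub
    _ = n * n - n := by
      rw [Finset.card_sdiff_of_subset (Finset.subset_univ G), hGcard, Finset.card_univ,
        Fintype.card_prod, Fintype.card_fin]
  rw [sum_mrank_eq, sum_wrank_eq] at hcard
  exact hcard

end Profile


/-- For `n ≥ 3`, no profile satisfies both m-MaxProp and w-MaxProp. -/
theorem mMaxProp_wMaxProp_disjoint (n : ℕ) (hn : 3 ≤ n) (P : Profile n) :
    ¬ (P.MaxProp ∧ P.swap.MaxProp) := by
  rintro ⟨h1, h2⟩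
  rw [Profile.MaxProp, Profile.totalProposals_eq] at h1 h2
  set μ := P.daMatching with hμ
  set ν' := (P.swap).daMatching with hν'
  -- swap stability transferred to P
  have hs : (P.swap).Stable ν' := Profile.daMatching_stable _
  have hνs : P.Stable ν'.symm := by
    rintro ⟨m, w, hmw, hwm⟩
    apply hs
    refine ⟨w, m, ?_, ?_⟩
    · show P.wPrefers w m (ν' w)
      rw [Equiv.symm_symm] at hwm
      exact hwm
    · exact hmw
  -- counting for the stable matching ν'.symm
  have hcount := Profile.stable_count hνs
  rw [Equiv.symm_symm] at hcount
  -- men-optimality of μ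
  have hopt : (∑ m : Fin n, P.mrank m (μ m)) ≤ ∑ m : Fin n, P.mrank m (ν'.symm m) :=
    Finset.sum_le_sum fun m _ => P.daMatching_optimal hνs m
  -- numerics
  have hswap : (∑ w : Fin n, (P.swap).mrank w (ν' w)) = ∑ w : Fin n, P.wrank w (ν' w) := rfl
  rw [hswap] at h2
  set q := n * n with hq
  set A := ∑ m : Fin n, P.mrank m (μ m) with hA
  set B := ∑ w : Fin n, P.wrank w (ν' w) with hB
  set C := ∑ m : Fin n, P.mrank m (ν'.symm m) with hC
  have h3n : 3 * n ≤ q := by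
    rw [hq]; exact Nat.mul_le_mul_right n hn
  omega

end
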